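/- arXiv:1803.09101 — 2 statements merged into one kernel-verified Lean document; each statement's English description precedes it below -/
import Mathlib

section
/- Identify ℝ² with ℂ. Let d_1,…,d_{12} be the points 0, i, 2i, 3i, 3, 3+i, 3+2i, 3+3i, 4+3i, 5+3i, 6+3i, 7+3i, let f_k(x) = (x + d_k)/4 for 1 ≤ k ≤ 12, and let E₃ be the unique nonempty compact subset of ℝ² with E₃ = ⋃_{k=1}^{12} f_k(E₃). Let K ⊆ ℝ be the 1/4-Cantor set, i.e. the unique nonempty compact set with K = (K/4) ∪ ((K+3)/4), and let C = {u + v·i : u ∈ K, 0 ≤ v ≤ 1}. Then C ⊆ E₃, and for every integer k ≥ 1 the vertical segment B_k = {1 − 4^{−k}·(3/8) + t·i : 0 ≤ t ≤ 1} is disjoint from E₃. -/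
open Complex

/-- The twelve digits `0, i, 2i, 3i, 3, 3+i, 3+2i, 3+3i, 4+3i, 5+3i, 6+3i, 7+3i`. -/
noncomputable def d12 : Fin 12 → ℂ :=
  ![0, I, 2 * I, 3 * I, 3, 3 + I, 3 + 2 * I, 3 + 3 * I,
    4 + 3 * I, 5 + 3 * I, 6 + 3 * I, 7 + 3 * I]

/-- The maps `f_k(x) = (x + d_k)/4`. -/
noncomputable def f12 (k : Fin 12) (x : ℂ) : ℂ := (x + d12 k) / 4


lemma d12_eq_0 : d12 0 = 0 := rfl
lemma d12_eq_1 : d12 1 = I := rfl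
lemma d12_eq_2 : d12 2 = 2 * I := rfl
lemma d12_eq_3 : d12 3 = 3 * I := rfl
lemma d12_eq_4 : d12 4 = 3 := rfl
lemma d12_eq_5 : d12 5 = 3 + I := rfl
lemma d12_eq_6 : d12 6 = 3 + 2 * I := rfl
lemma d12_eq_7 : d12 7 = 3 + 3 * I := rfl

lemma f12_dist (k : Fin 12) (x y : ℂ) : dist (f12 k x) (f12 k y) = dist x y / 4 := by
  have h : f12 k x - f12 k y = (x - y) / 4 := by simp only [f12]; ring
  rw [Complex.dist_eq, Complex.dist_eq, h, norm_div]
  norm_num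

lemma subset_of_invariant {S T : Set ℂ} (hS : IsCompact S) (hT : IsClosed T)
    (hTne : T.Nonempty)
    (hmap : ∀ x ∈ S, ∃ k : Fin 12, ∃ x' ∈ S, f12 k x' = x)
    (hinv : ∀ k : Fin 12, f12 k '' T ⊆ T) : S ⊆ T := by
  rcases S.eq_empty_or_nonempty with rfl | hSne
  · simp
  obtain ⟨x₀, hx₀S, hmax⟩ := hS.exists_isMaxOn hSne
    ((Metric.continuous_infDist_pt T).continuousOn)
  have hδ0 : Metric.infDist x₀ T ≤ 0 := by
    by_contra h
    push_neg at h
    obtain ⟨k, x', hx'S, hfx⟩ := hmap x₀ hx₀S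
    have hx'le : Metric.infDist x' T ≤ Metric.infDist x₀ T := hmax hx'S
    have hlt : Metric.infDist x' T < Metric.infDist x₀ T * 2 := by linarith
    obtain ⟨y, hyT, hy⟩ := (Metric.infDist_lt_iff hTne).1 hlt
    have hmem : f12 k y ∈ T := hinv k ⟨y, hyT, rfl⟩
    have h1 : Metric.infDist x₀ T ≤ dist x₀ (f12 k y) :=
      Metric.infDist_le_dist_of_mem hmem
    have h2 : dist x₀ (f12 k y) = dist x' y / 4 := by rw [← hfx, f12_dist]
    linarith
  intro x hxS
  have h1 : Metric.infDist x T ≤ 0 := le_trans (hmax hxS) hδ0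
  have h2 : Metric.infDist x T = 0 := le_antisymm h1 Metric.infDist_nonneg
  exact (hT.mem_iff_infDist_zero hTne).2 h2

/-- The gaps in the projection of `E₃`. -/
def gap3 (k : ℕ) : Set ℝ :=
  Set.Ioo (1 - (5 / 12) * (4 : ℝ) ^ (-(k : ℤ))) (1 - (1 / 4) * (4 : ℝ) ^ (-(k : ℤ)))

def P3 : Set ℝ := Set.Icc 0 (7 / 3) \ ⋃ k : ℕ, gap3 k

lemma zpow_pos4 (k : ℕ) : (0 : ℝ) < (4 : ℝ) ^ (-(k : ℤ)) := by positivity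

lemma zpow_le_one4 (k : ℕ) : (4 : ℝ) ^ (-(k : ℤ)) ≤ 1 :=
  zpow_le_one_of_nonpos₀ (by norm_num) (by simp)

lemma P3_inv (u : ℝ) (hu : u ∈ P3) (a : ℝ)
    (ha : a = 0 ∨ a = 3 ∨ a = 4 ∨ a = 5 ∨ a = 6 ∨ a = 7) : (u + a) / 4 ∈ P3 := by
  obtain ⟨⟨h0, h7⟩, hgap⟩ := hu
  simp only [Set.mem_iUnion, not_exists, gap3, Set.mem_Ioo, not_and, not_lt] at hgap
  have haneg : 0 ≤ a := by rcases ha with h|h|h|h|h|h <;> simp [h] <;> norm_num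
  have ha7 : a ≤ 7 := by rcases ha with h|h|h|h|h|h <;> simp [h] <;> norm_num
  refine ⟨⟨by linarith, by linarith⟩, ?_⟩
  simp only [Set.mem_iUnion, not_exists, gap3, Set.mem_Ioo, not_and, not_lt]
  intro k h1
  by_contra h2
  push_neg at h2
  have hp := zpow_pos4 k
  have hle := zpow_le_one4 k
  rcases ha with h|h|h|h|h|h
  · subst h; linarith
  · subst h
    rcases Nat.eq_zero_or_pos k with rfl | hk
    · simp only [Nat.cast_zero, neg_zero, zpow_zero, mul_one] at h2; linarith
    · obtain ⟨m, rfl⟩ := Nat.exists_eq_add_of_le hk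
      have hz : (4 : ℝ) ^ (-((1 + m : ℕ) : ℤ)) = 4 ^ (-(m : ℤ)) / 4 := by
        push_cast
        rw [neg_add, zpow_add₀ (by norm_num : (4:ℝ) ≠ 0)]
        norm_num
        ring
      rw [hz] at h1 h2
      have := hgap m (by linarith)
      linarith
  · subst h; linarith
  · subst h; linarith
  · subst h; linarith
  · subst h; linarith

lemma zero_mem_P3 : (0 : ℝ) ∈ P3 := by
  refine ⟨⟨le_refl _, by norm_num⟩, ?_⟩
  simp only [Set.mem_iUnion, not_exists, gap3, Set.mem_Ioo, not_and, not_lt]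
  intro k h1
  have hle := zpow_le_one4 k
  linarith

/-- The invariant region containing `E₃`. -/
def A3 : Set ℂ := {z : ℂ | z.re ∈ P3 ∧ z.im ∈ Set.Icc (0 : ℝ) 1}

lemma f12_re (k : Fin 12) (z : ℂ) : (f12 k z).re = (z.re + (d12 k).re) / 4 := by
  have : (4 : ℂ) = ((4 : ℝ) : ℂ) := by norm_num
  rw [f12, this, Complex.div_ofReal_re, Complex.add_re]

lemma f12_im (k : Fin 12) (z : ℂ) : (f12 k z).im = (z.im + (d12 k).im) / 4 := by
  have : (4 : ℂ) = ((4 : ℝ) : ℂ) := by norm_num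
  rw [f12, this, Complex.div_ofReal_im, Complex.add_im]

lemma A3_closed : IsClosed A3 := by
  have hP : IsClosed P3 := isClosed_Icc.sdiff (isOpen_iUnion fun k => isOpen_Ioo)
  exact (hP.preimage Complex.continuous_re).inter
    (isClosed_Icc.preimage Complex.continuous_im)

lemma A3_inv (k : Fin 12) : f12 k '' A3 ⊆ A3 := by
  rintro _ ⟨z, ⟨hre, him⟩, rfl⟩
  obtain ⟨him0, him1⟩ := him
  constructor
  · rw [f12_re]
    refine P3_inv z.re hre (d12 k).re ?_
    fin_cases k <;> norm_num [d12, Matrix.cons_val_succ, Matrix.cons_val_zero]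
  · rw [Set.mem_Icc, f12_im]
    have h1 : (0:ℝ) ≤ (d12 k).im ∧ (d12 k).im ≤ 3 := by
      fin_cases k <;> norm_num [d12, Matrix.cons_val_succ, Matrix.cons_val_zero]
    constructor <;> linarith [h1.1, h1.2]

/-- Let `E₃` be the attractor of the twelve maps `f_k`, let `K`
be the 1/4-Cantor set and `C = {u + v·i : u ∈ K, 0 ≤ v ≤ 1}`. Then `C ⊆ E₃`, and
for every `k ≥ 1` the vertical segment `B_k = {1 - 4^{-k}·(3/8) + t·i : 0 ≤ t ≤ 1}`
is disjoint from `E₃`. -/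
theorem E3_contains_cantor_strip_and_avoids_segments
    (E₃ : Set ℂ) (hne : E₃.Nonempty) (hc : IsCompact E₃)
    (hE : E₃ = ⋃ k : Fin 12, f12 k '' E₃)
    (K : Set ℝ) (hKne : K.Nonempty) (hKc : IsCompact K)
    (hK : K = (fun x : ℝ => x / 4) '' K ∪ (fun x : ℝ => (x + 3) / 4) '' K) :
    Set.image2 (fun u v : ℝ => (u : ℂ) + (v : ℂ) * I) K (Set.Icc (0 : ℝ) 1) ⊆ E₃
    ∧ ∀ k : ℕ, 1 ≤ k →
        (fun t : ℝ => (((1 - (4 : ℝ) ^ (-(k : ℤ)) * (3 / 8) : ℝ)) : ℂ) + (t : ℂ) * I) ''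
            Set.Icc (0 : ℝ) 1 ∩ E₃ = ∅ := by
  have hEinv : ∀ k : Fin 12, f12 k '' E₃ ⊆ E₃ := by
    intro k x hx
    rw [hE]
    exact Set.mem_iUnion.2 ⟨k, hx⟩
  constructor
  · -- C ⊆ E₃
    set g : ℝ → ℝ → ℂ := fun u v => (u : ℂ) + (v : ℂ) * I with hg
    apply subset_of_invariant _ hc.isClosed hne _ hEinv
    · rw [← Set.image_prod]
      exact (hKc.prod isCompact_Icc).image (by fun_prop)
    · rintro x hx
      rw [Set.mem_image2] at hx
      obtain ⟨u, hu, v, hv, rfl⟩ := hx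
      obtain ⟨hv0, hv1⟩ := hv
      have hu' := hK ▸ hu
      rcases hu' with ⟨u', hu', hequ⟩ | ⟨u', hu', hequ⟩ <;>
        replace hequ : _ = u := hequ
      · -- u = u'/4, digits 0..3 (column x=0)
        rcases le_or_gt v (1/4) with hcv | hcv
        · exact ⟨0, g u' (4*v), Set.mem_image2_of_mem hu' ⟨by linarith, by linarith⟩,
            by simp only [hg, f12, d12_eq_0]; rw [← hequ]; push_cast; ring⟩
        rcases le_or_gt v (1/2) with hcv2 | hcv2
        · exact ⟨1, g u' (4*v - 1), Set.mem_image2_of_mem hu' ⟨by linarith, by linarith⟩,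
            by simp only [hg, f12, d12_eq_1]; rw [← hequ]; push_cast; ring⟩
        rcases le_or_gt v (3/4) with hcv3 | hcv3
        · exact ⟨2, g u' (4*v - 2), Set.mem_image2_of_mem hu' ⟨by linarith, by linarith⟩,
            by simp only [hg, f12, d12_eq_2]; rw [← hequ]; push_cast; ring⟩
        · exact ⟨3, g u' (4*v - 3), Set.mem_image2_of_mem hu' ⟨by linarith, by linarith⟩,
            by simp only [hg, f12, d12_eq_3]; rw [← hequ]; push_cast; ring⟩
      · -- u = (u'+3)/4, digits 4..7 (column x=3)
        rcases le_or_gt v (1/4) with hcv | hcv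
        · exact ⟨4, g u' (4*v), Set.mem_image2_of_mem hu' ⟨by linarith, by linarith⟩,
            by simp only [hg, f12, d12_eq_4]; rw [← hequ]; push_cast; ring⟩
        rcases le_or_gt v (1/2) with hcv2 | hcv2
        · exact ⟨5, g u' (4*v - 1), Set.mem_image2_of_mem hu' ⟨by linarith, by linarith⟩,
            by simp only [hg, f12, d12_eq_5]; rw [← hequ]; push_cast; ring⟩
        rcases le_or_gt v (3/4) with hcv3 | hcv3
        · exact ⟨6, g u' (4*v - 2), Set.mem_image2_of_mem hu' ⟨by linarith, by linarith⟩,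
            by simp only [hg, f12, d12_eq_6]; rw [← hequ]; push_cast; ring⟩
        · exact ⟨7, g u' (4*v - 3), Set.mem_image2_of_mem hu' ⟨by linarith, by linarith⟩,
            by simp only [hg, f12, d12_eq_7]; rw [← hequ]; push_cast; ring⟩
  · -- segments avoid E₃
    have hEA : E₃ ⊆ A3 := by
      apply subset_of_invariant hc A3_closed ⟨0, zero_mem_P3, by norm_num, by norm_num⟩
        _ A3_inv
      intro x hx
      rw [hE] at hx
      obtain ⟨k, x', hx', hfx⟩ := Set.mem_iUnion.1 hx
      exact ⟨k, x', hx', hfx⟩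
    intro k hk
    rw [Set.eq_empty_iff_forall_notMem]
    rintro z ⟨⟨t, ht, rfl⟩, hzE⟩
    have hA := hEA hzE
    have hregen : ∀ r s : ℝ, ((r : ℂ) + (s : ℂ) * I).re = r := fun r s => by simp
    have hre := hregen (1 - (4 : ℝ) ^ (-(k : ℤ)) * (3 / 8)) t
    have hPmem := hA.1
    rw [hre] at hPmem
    have hgapmem : (1 - (4 : ℝ) ^ (-(k : ℤ)) * (3 / 8)) ∈ gap3 k := by
      have hp := zpow_pos4 k
      rw [gap3, Set.mem_Ioo]
      constructor <;> nlinarith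
    exact hPmem.2 (Set.mem_iUnion.2 ⟨k, hgapmem⟩)
end

section
/- Identify ℝ² with ℂ. Let d_1,…,d_{12} be the points 0, i, 2i, 3i, 3, 3+i, 3+2i, 3+3i, 4+3i, 5+3i, 6+3i, 7+3i, let f_k(x) = (x + d_k)/4 for 1 ≤ k ≤ 12, and let E₃ be the unique nonempty compact subset of ℝ² with E₃ = ⋃_{k=1}^{12} f_k(E₃). Let K ⊆ ℝ be the 1/4-Cantor set (K = (K/4) ∪ ((K+3)/4)), C = {u + v·i : u ∈ K, 0 ≤ v ≤ 1}, and X = (⋃_{k=9}^{12} f_k(C)) ∪ {t + i : 1 ≤ t ≤ 2}. Then X is a continuum (compact and connected), X is not locally connected, and X ⊆ E₃. -/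
open Complex

lemma f12_cont (k : Fin 12) : Continuous (f12 k) := by
  unfold f12; fun_prop

lemma f12_eval (k : Fin 12) (a b : ℝ) (hd : d12 k = (a:ℂ) + (b:ℂ)*I) (u v : ℝ) :
    f12 k ((u:ℂ) + (v:ℂ)*I) = (((u+a)/4 : ℝ) : ℂ) + (((v+b)/4 : ℝ):ℂ) * I := by
  simp only [f12, hd]
  push_cast
  ring

lemma f12_eval' (k : Fin 12) (a b : ℝ) (hd : d12 k = (a:ℂ) + (b:ℂ)*I) (u' v' u v : ℝ)
    (hu : u = (u'+a)/4) (hv : v = (v'+b)/4) :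
    f12 k ((u':ℂ) + (v':ℂ)*I) = (u:ℂ) + (v:ℂ)*I := by
  rw [f12_eval k a b hd u' v', hu, hv]

lemma f12_re_s16 (k : Fin 12) (a b : ℝ) (hd : d12 k = (a:ℂ) + (b:ℂ)*I) (u v : ℝ) :
    (f12 k ((u:ℂ) + (v:ℂ)*I)).re = (u+a)/4 := by
  rw [f12_eval k a b hd u v]; simp

/-- absorption lemma -/
lemma subset_of_selfmap (E : Set ℂ) (hEne : E.Nonempty) (hEc : IsCompact E)
    (hinv : ∀ k x, x ∈ E → f12 k x ∈ E)
    (S : Set ℂ) (hSc : IsCompact S)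
    (hS : ∀ z ∈ S, ∃ k, ∃ w ∈ S, f12 k w = z) : S ⊆ E := by
  rcases S.eq_empty_or_nonempty with h | hSne
  · simp [h]
  have hcont : ContinuousOn (fun z => Metric.infDist z E) S :=
    (Metric.continuous_infDist_pt E).continuousOn
  obtain ⟨z₀, hz₀S, hmax⟩ := hSc.exists_isMaxOn hSne hcont
  have hD0 : Metric.infDist z₀ E ≤ 0 := by
    obtain ⟨k, w, hwS, hfw⟩ := hS z₀ hz₀S
    obtain ⟨e, heE, hed⟩ := hEc.exists_infDist_eq_dist hEne w
    have h1 : Metric.infDist z₀ E ≤ dist w e / 4 := by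
      rw [← hfw, ← f12_dist k w e]
      exact Metric.infDist_le_dist_of_mem (hinv k e heE)
    have h2 : Metric.infDist w E ≤ Metric.infDist z₀ E := hmax hwS
    rw [← hed] at h1
    linarith
  intro z hz
  have h0 : Metric.infDist z E = 0 :=
    le_antisymm (le_trans (hmax hz) hD0) Metric.infDist_nonneg
  exact (hEc.isClosed.mem_iff_infDist_zero hEne).2 h0

example : True := trivial
-- d12 value lemmas
lemma d12_0 : d12 0 = ((0:ℝ):ℂ) + ((0:ℝ):ℂ)*I := by show (0:ℂ) = _; push_cast; ring
lemma d12_1 : d12 1 = ((0:ℝ):ℂ) + ((1:ℝ):ℂ)*I := by show (I:ℂ) = _; push_cast; ring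
lemma d12_2 : d12 2 = ((0:ℝ):ℂ) + ((2:ℝ):ℂ)*I := by show (2*I:ℂ) = _; push_cast; ring
lemma d12_3 : d12 3 = ((0:ℝ):ℂ) + ((3:ℝ):ℂ)*I := by show (3*I:ℂ) = _; push_cast; ring
lemma d12_4 : d12 4 = ((3:ℝ):ℂ) + ((0:ℝ):ℂ)*I := by show (3:ℂ) = _; push_cast; ring
lemma d12_5 : d12 5 = ((3:ℝ):ℂ) + ((1:ℝ):ℂ)*I := by show (3+I:ℂ) = _; push_cast; ring
lemma d12_6 : d12 6 = ((3:ℝ):ℂ) + ((2:ℝ):ℂ)*I := by show (3+2*I:ℂ) = _; push_cast; ring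
lemma d12_7 : d12 7 = ((3:ℝ):ℂ) + ((3:ℝ):ℂ)*I := by show (3+3*I:ℂ) = _; push_cast; ring
lemma d12_8 : d12 8 = ((4:ℝ):ℂ) + ((3:ℝ):ℂ)*I := by show (4+3*I:ℂ) = _; push_cast; ring
lemma d12_9 : d12 9 = ((5:ℝ):ℂ) + ((3:ℝ):ℂ)*I := by show (5+3*I:ℂ) = _; push_cast; ring
lemma d12_10 : d12 10 = ((6:ℝ):ℂ) + ((3:ℝ):ℂ)*I := by show (6+3*I:ℂ) = _; push_cast; ring
lemma d12_11 : d12 11 = ((7:ℝ):ℂ) + ((3:ℝ):ℂ)*I := by show (7+3*I:ℂ) = _; push_cast; ring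
set_option maxHeartbeats 2000000 in
/-- Let `E₃` be the attractor of the twelve maps `f_k`, `K` the
1/4-Cantor set, `C = {u + v·i : u ∈ K, 0 ≤ v ≤ 1}`, and
`X = (⋃_{k=9}^{12} f_k(C)) ∪ {t + i : 1 ≤ t ≤ 2}` (indices `9,…,12` in 1-based
numbering, i.e. `8,9,10,11` in `Fin 12`). Then `X` is a continuum (compact and
connected), `X` is not locally connected, and `X ⊆ E₃`. -/
theorem X_is_nonlocally_connected_subcontinuum_of_E3
    (E₃ : Set ℂ) (hne : E₃.Nonempty) (hc : IsCompact E₃)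
    (hE : E₃ = ⋃ k : Fin 12, f12 k '' E₃)
    (K : Set ℝ) (hKne : K.Nonempty) (hKc : IsCompact K)
    (hK : K = (fun x : ℝ => x / 4) '' K ∪ (fun x : ℝ => (x + 3) / 4) '' K)
    (C : Set ℂ)
    (hC : C = Set.image2 (fun u v : ℝ => (u : ℂ) + (v : ℂ) * I) K (Set.Icc (0 : ℝ) 1))
    (X : Set ℂ)
    (hX : X = (⋃ k ∈ ({8, 9, 10, 11} : Set (Fin 12)), f12 k '' C)
        ∪ (fun t : ℝ => (t : ℂ) + I) '' Set.Icc (1 : ℝ) 2) :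
    IsCompact X ∧ IsConnected X ∧ ¬ LocallyConnectedSpace X ∧ X ⊆ E₃ := by
  -- K facts
  have hKdiv : ∀ x ∈ K, x/4 ∈ K := by
    intro x hx
    rw [hK]
    exact Or.inl ⟨x, hx, rfl⟩
  have hKadd : ∀ x ∈ K, (x+3)/4 ∈ K := by
    intro x hx
    rw [hK]
    exact Or.inr ⟨x, hx, rfl⟩
  have hKmem : ∀ x ∈ K, (∃ y ∈ K, x = y/4) ∨ ∃ y ∈ K, x = (y+3)/4 := by
    intro x hx
    rw [hK] at hx
    rcases hx with ⟨y, hy, hxy⟩ | ⟨y, hy, hxy⟩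
    · exact Or.inl ⟨y, hy, hxy.symm⟩
    · exact Or.inr ⟨y, hy, hxy.symm⟩
  have hK1 : ∀ x ∈ K, x ≤ 1 := by
    have hMK := hKc.sSup_mem hKne
    have hM1 : sSup K ≤ 1 := by
      rcases hKmem _ hMK with ⟨y, hy, hMy⟩ | ⟨y, hy, hMy⟩ <;>
        have := le_csSup hKc.bddAbove hy <;> linarith
    exact fun x hx => le_trans (le_csSup hKc.bddAbove hx) hM1
  have hK0 : ∀ x ∈ K, 0 ≤ x := by
    have hmK := hKc.sInf_mem hKne
    have hm0 : 0 ≤ sInf K := by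
      rcases hKmem _ hmK with ⟨y, hy, hmy⟩ | ⟨y, hy, hmy⟩ <;>
        have := csInf_le hKc.bddBelow hy <;> linarith
    exact fun x hx => le_trans hm0 (csInf_le hKc.bddBelow hx)
  have h0K : (0:ℝ) ∈ K := by
    have hmK := hKc.sInf_mem hKne
    have h1 : sInf K ≤ sInf K / 4 := csInf_le hKc.bddBelow (hKdiv _ hmK)
    have h2 : 0 ≤ sInf K := hK0 _ hmK
    have h3 : sInf K = 0 := by linarith
    rwa [h3] at hmK
  have h3pow : ∀ n : ℕ, 3/4^(n+1) ∈ K := by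
    intro n
    induction n with
    | zero => simpa using hKadd 0 h0K
    | succ m ih =>
        have := hKdiv _ ih
        have heq : (3:ℝ)/4^(m+1)/4 = 3/4^(m+1+1) := by rw [pow_succ]; ring
        rwa [heq] at this
  have hgap : ∀ n : ℕ, ∀ x ∈ K, ¬ ((1:ℝ)/4^n < x ∧ x < 3/4^n) := by
    intro n
    induction n with
    | zero =>
        rintro x hx ⟨h1, h2⟩
        have := hK1 x hx
        norm_num at h1
        linarith
    | succ m ih =>
        rintro x hx ⟨h1, h2⟩
        have hp : (0:ℝ) < 4^m := by positivity
        have hps : (4:ℝ)^(m+1) = 4^m * 4 := pow_succ 4 m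
        rcases hKmem x hx with ⟨y, hy, hxy⟩ | ⟨y, hy, hxy⟩
        · refine ih y hy ⟨?_, ?_⟩
          · rw [hps] at h1
            rw [div_lt_iff₀ (by positivity)] at h1 ⊢
            nlinarith
          · rw [hps] at h2
            rw [lt_div_iff₀ (by positivity)] at h2 ⊢
            nlinarith
        · have hy0 := hK0 y hy
          have h34 : (3:ℝ)/4^(m+1) ≤ 3/4 := by
            apply div_le_div_of_nonneg_left (by norm_num) (by norm_num)
            calc (4:ℝ) = 4^1 := by norm_num
            _ ≤ 4^(m+1) := by apply pow_le_pow_right₀ (by norm_num) (by omega)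
          linarith
  -- membership characterizations
  have hCmem : ∀ z ∈ C, ∃ u ∈ K, ∃ v ∈ Set.Icc (0:ℝ) 1, (u:ℂ) + (v:ℂ)*I = z := by
    intro z hz
    rw [hC] at hz
    obtain ⟨u, hu, v, hv, hzz⟩ := hz
    exact ⟨u, hu, v, hv, hzz⟩
  have hCmem' : ∀ (u v : ℝ), u ∈ K → v ∈ Set.Icc (0:ℝ) 1 → (u:ℂ) + (v:ℂ)*I ∈ C := by
    intro u v hu hv
    rw [hC]
    exact Set.mem_image2_of_mem hu hv
  -- compactness of C
  have hmapc : Continuous (fun p : ℝ × ℝ => (p.1:ℂ) + (p.2:ℂ)*I) := by fun_prop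
  have hCc : IsCompact C := by
    rw [hC, ← Set.image_prod]
    exact (hKc.prod isCompact_Icc).image hmapc
  -- E₃ invariance
  have hEinv : ∀ k x, x ∈ E₃ → f12 k x ∈ E₃ := by
    intro k x hx
    rw [hE]
    exact Set.mem_iUnion.2 ⟨k, Set.mem_image_of_mem _ hx⟩
  -- C is covered by the first eight maps
  have hCsub : ∀ z ∈ C, ∃ k, ∃ w ∈ C, f12 k w = z := by
    intro z hz
    obtain ⟨u, hu, v, ⟨hv0, hv1⟩, rfl⟩ := hCmem z hz
    have hudec : ∃ a u', (a = (0:ℝ) ∨ a = 3) ∧ u' ∈ K ∧ u = (u'+a)/4 := by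
      rcases hKmem u hu with ⟨y, hy, hxy⟩ | ⟨y, hy, hxy⟩
      · exact ⟨0, y, Or.inl rfl, hy, by linarith⟩
      · exact ⟨3, y, Or.inr rfl, hy, hxy⟩
    have hvdec : ∃ b v', (b = (0:ℝ) ∨ b = 1 ∨ b = 2 ∨ b = 3) ∧ 0 ≤ v' ∧ v' ≤ 1 ∧
        v = (v'+b)/4 := by
      rcases le_or_gt v (1/4) with h | h
      · exact ⟨0, 4*v, Or.inl rfl, by linarith, by linarith, by ring⟩
      rcases le_or_gt v (1/2) with h2 | h2
      · exact ⟨1, 4*v-1, Or.inr (Or.inl rfl), by linarith, by linarith, by ring⟩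
      rcases le_or_gt v (3/4) with h3 | h3
      · exact ⟨2, 4*v-2, Or.inr (Or.inr (Or.inl rfl)), by linarith, by linarith, by ring⟩
      · exact ⟨3, 4*v-3, Or.inr (Or.inr (Or.inr rfl)), by linarith, by linarith, by ring⟩
    obtain ⟨a, u', ha, hu', hueq⟩ := hudec
    obtain ⟨b, v', hb, hv'0, hv'1, hveq⟩ := hvdec
    have hd : ∃ k : Fin 12, d12 k = (a:ℂ) + (b:ℂ)*I := by
      rcases ha with rfl | rfl <;> rcases hb with rfl | rfl | rfl | rfl
      exacts [⟨0, d12_0⟩, ⟨1, d12_1⟩, ⟨2, d12_2⟩, ⟨3, d12_3⟩,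
        ⟨4, d12_4⟩, ⟨5, d12_5⟩, ⟨6, d12_6⟩, ⟨7, d12_7⟩]
    obtain ⟨k, hk⟩ := hd
    exact ⟨k, (u':ℂ) + (v':ℂ)*I, hCmem' u' v' hu' ⟨hv'0, hv'1⟩,
      f12_eval' k a b hk u' v' u v hueq hveq⟩
  have hCE : C ⊆ E₃ := subset_of_selfmap E₃ hne hc hEinv C hCc hCsub
  -- the segment
  set Sseg : Set ℂ := (fun t : ℝ => (t:ℂ) + I) '' Set.Icc (1:ℝ) 2 with hSseg
  have hsegcont : Continuous (fun t : ℝ => (t:ℂ) + I) := by fun_prop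
  have hSsegc : IsCompact Sseg := isCompact_Icc.image hsegcont
  have hf12seg : ∀ (k : Fin 12) (a : ℝ), d12 k = (a:ℂ) + ((3:ℝ):ℂ)*I → ∀ t' t : ℝ,
      t = (t'+a)/4 → f12 k ((t':ℂ) + I) = (t:ℂ) + I := by
    intro k a hk t' t ht
    have h1 : ((t':ℂ) + I) = (t':ℂ) + ((1:ℝ):ℂ)*I := by push_cast; ring
    have h2 := f12_eval' k a 3 hk t' 1 t 1 ht (by norm_num)
    rw [h1, h2]
    push_cast; ring
  have hSsub : ∀ z ∈ Sseg, ∃ k, ∃ w ∈ Sseg, f12 k w = z := by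
    rintro z ⟨t, ⟨ht1, ht2⟩, rfl⟩
    set a : ℤ := ⌊4*t⌋ - 1 with haa
    have hfl : ((⌊4*t⌋:ℤ):ℝ) ≤ 4*t := Int.floor_le _
    have hfl2 : 4*t < ((⌊4*t⌋:ℤ):ℝ) + 1 := Int.lt_floor_add_one _
    have ha3 : 3 ≤ a := by
      have : (4:ℤ) ≤ ⌊4*t⌋ := by
        apply Int.le_floor.2; push_cast; linarith
      omega
    have ha7 : a ≤ 7 := by
      have : ⌊4*t⌋ ≤ (8:ℤ) := by
        have h8 : ⌊4*t⌋ ≤ ⌊(8:ℝ)⌋ := Int.floor_le_floor (by linarith)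
        simpa using h8
      omega
    set t' : ℝ := 4*t - a with ht'
    have hreal : (a:ℝ) = ((⌊4*t⌋:ℤ):ℝ) - 1 := by rw [haa]; push_cast; ring
    have ht'1 : 1 ≤ t' := by rw [ht', hreal]; linarith
    have ht'2 : t' ≤ 2 := by rw [ht', hreal]; linarith
    have hteq : t = (t' + a)/4 := by rw [ht']; ring
    have hw : ((t':ℂ) + I) ∈ Sseg := ⟨t', ⟨ht'1, ht'2⟩, rfl⟩
    interval_cases a
    · exact ⟨7, _, hw, hf12seg 7 3 d12_7 t' t (by push_cast at hteq ⊢; linarith)⟩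
    · exact ⟨8, _, hw, hf12seg 8 4 d12_8 t' t (by push_cast at hteq ⊢; linarith)⟩
    · exact ⟨9, _, hw, hf12seg 9 5 d12_9 t' t (by push_cast at hteq ⊢; linarith)⟩
    · exact ⟨10, _, hw, hf12seg 10 6 d12_10 t' t (by push_cast at hteq ⊢; linarith)⟩
    · exact ⟨11, _, hw, hf12seg 11 7 d12_11 t' t (by push_cast at hteq ⊢; linarith)⟩
  have hSE : Sseg ⊆ E₃ := subset_of_selfmap E₃ hne hc hEinv Sseg hSsegc hSsub
  -- X ⊆ E₃
  have hXE : X ⊆ E₃ := by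
    rw [hX]
    apply Set.union_subset
    · refine Set.iUnion₂_subset fun k _ => ?_
      rintro z ⟨w, hw, rfl⟩
      exact hEinv k w (hCE hw)
    · exact hSE
  -- compactness of X
  have hXc : IsCompact X := by
    rw [hX]
    refine IsCompact.union ?_ hSsegc
    have : ({8, 9, 10, 11} : Set (Fin 12)).Finite := Set.toFinite _
    apply this.isCompact_biUnion
    intro k _
    exact hCc.image (f12_cont k)
  -- connectedness
  set Col : ℝ → Set ℂ := fun u => (fun v : ℝ => (u:ℂ) + (v:ℂ)*I) '' Set.Icc (0:ℝ) 1
    with hCol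
  have hk4 : ∀ k ∈ ({8,9,10,11} : Set (Fin 12)), ∃ a : ℝ,
      d12 k = (a:ℂ) + ((3:ℝ):ℂ)*I ∧ (a = 4 ∨ a = 5 ∨ a = 6 ∨ a = 7) := by
    intro k hk
    simp only [Set.mem_insert_iff, Set.mem_singleton_iff] at hk
    rcases hk with rfl | rfl | rfl | rfl
    exacts [⟨4, d12_8, Or.inl rfl⟩, ⟨5, d12_9, Or.inr (Or.inl rfl)⟩,
      ⟨6, d12_10, Or.inr (Or.inr (Or.inl rfl))⟩, ⟨7, d12_11, Or.inr (Or.inr (Or.inr rfl))⟩]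
  have h1I : (1:ℂ) + I ∈ Sseg := ⟨1, ⟨le_refl 1, by norm_num⟩, by norm_num⟩
  have hSconn : IsConnected Sseg :=
    (isConnected_Icc (by norm_num : (1:ℝ) ≤ 2)).image _ hsegcont.continuousOn
  have hColconn : ∀ u : ℝ, IsConnected (Col u) := fun u =>
    (isConnected_Icc (by norm_num : (0:ℝ) ≤ 1)).image _ (by fun_prop : Continuous
      (fun v : ℝ => (u:ℂ) + (v:ℂ)*I)).continuousOn
  have hTconn : ∀ k ∈ ({8,9,10,11} : Set (Fin 12)), ∀ u ∈ K,
      IsConnected (Sseg ∪ f12 k '' Col u) := by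
    intro k hk u hu
    obtain ⟨a, hd, hacases⟩ := hk4 k hk
    have ha4 : 4 ≤ a := by rcases hacases with rfl | rfl | rfl | rfl <;> norm_num
    have ha7 : a ≤ 7 := by rcases hacases with rfl | rfl | rfl | rfl <;> norm_num
    have hu0 := hK0 u hu
    have hu1 := hK1 u hu
    have hpS : (((u+a)/4 : ℝ):ℂ) + ((1:ℝ):ℂ)*I ∈ Sseg := by
      refine ⟨(u+a)/4, ⟨by linarith, by linarith⟩, ?_⟩
      push_cast; ring
    have hpC : (((u+a)/4 : ℝ):ℂ) + ((1:ℝ):ℂ)*I ∈ f12 k '' Col u := by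
      refine ⟨(u:ℂ) + ((1:ℝ):ℂ)*I, ⟨1, ⟨by norm_num, le_refl 1⟩, rfl⟩, ?_⟩
      exact f12_eval' k a 3 hd u 1 ((u+a)/4) 1 rfl (by norm_num)
    exact IsConnected.union ⟨_, hpS, hpC⟩ hSconn
      ((hColconn u).image _ (f12_cont k).continuousOn)
  have h1IX : (1:ℂ) + I ∈ X := by rw [hX]; exact Or.inr h1I
  have hXeq : X = ⋃₀ {T : Set ℂ | ∃ k ∈ ({8,9,10,11} : Set (Fin 12)), ∃ u ∈ K,
      T = Sseg ∪ f12 k '' Col u} := by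
    apply Set.Subset.antisymm
    · rw [hX]
      rintro z (hz | hz)
      · obtain ⟨k, hk, w, hwC, hfw⟩ := Set.mem_iUnion₂.1 hz
        obtain ⟨u, hu, v, hv, hw⟩ := hCmem w hwC
        refine Set.mem_sUnion.2 ⟨Sseg ∪ f12 k '' Col u, ⟨k, hk, u, hu, rfl⟩, Or.inr ?_⟩
        exact ⟨w, hw ▸ ⟨v, hv, rfl⟩, hfw⟩
      · refine Set.mem_sUnion.2 ⟨Sseg ∪ f12 8 '' Col 0,
          ⟨8, by norm_num, 0, h0K, rfl⟩, Or.inl hz⟩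
    · apply Set.sUnion_subset
      rintro T ⟨k, hk, u, hu, rfl⟩
      apply Set.union_subset
      · rw [hX]; exact Set.subset_union_right
      · rw [hX]
        refine Set.Subset.trans ?_ Set.subset_union_left
        refine Set.Subset.trans ?_ (Set.subset_biUnion_of_mem hk)
        apply Set.image_mono
        rintro z ⟨v, hv, rfl⟩
        exact hCmem' u v hu hv
  have hXconn : IsConnected X := by
    refine ⟨⟨(1:ℂ) + I, h1IX⟩, ?_⟩
    rw [hXeq]
    apply isPreconnected_sUnion ((1:ℂ) + I)
    · rintro T ⟨k, hk, u, hu, rfl⟩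
      exact Or.inl h1I
    · rintro T ⟨k, hk, u, hu, rfl⟩
      exact (hTconn k hk u hu).isPreconnected
  refine ⟨hXc, hXconn, ?_, hXE⟩
  -- not locally connected
  intro hLC
  set z₀ : ℂ := ((1:ℝ):ℂ) + ((3/4:ℝ):ℂ)*I with hz₀def
  have hz₀X : z₀ ∈ X := by
    rw [hX]
    refine Or.inl (Set.mem_biUnion (show (8:Fin 12) ∈ ({8,9,10,11} : Set (Fin 12))
      by norm_num) ?_)
    exact ⟨((0:ℝ):ℂ) + ((0:ℝ):ℂ)*I, hCmem' 0 0 h0K (by norm_num),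
      f12_eval' 8 4 3 d12_8 0 0 1 (3/4) (by norm_num) (by norm_num)⟩
  rw [locallyConnectedSpace_iff_connected_subsets] at hLC
  set x₀ : X := ⟨z₀, hz₀X⟩ with hx₀def
  obtain ⟨V, hVnhds, hVconn, hVU⟩ := hLC x₀ (Subtype.val ⁻¹' Metric.ball z₀ (1/8))
    (continuous_subtype_val.continuousAt.preimage_mem_nhds
      (Metric.ball_mem_nhds z₀ (by norm_num)))
  obtain ⟨W, hWnhds, hWV⟩ := (mem_nhds_subtype X x₀ V).1 hVnhds
  obtain ⟨ε, hε, hball⟩ := Metric.mem_nhds_iff.1 hWnhds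
  have hst : ∀ z, z ∈ X → dist z z₀ < ε → z ∈ Subtype.val '' V := by
    intro z hzX hzd
    exact ⟨⟨z, hzX⟩, hWV (hball (Metric.mem_ball.2 hzd)), rfl⟩
  have hV'X : Subtype.val '' V ⊆ X := by rintro _ ⟨x, _, rfl⟩; exact x.2
  have hV'ball : Subtype.val '' V ⊆ Metric.ball z₀ (1/8) := by
    rintro _ ⟨x, hxV, rfl⟩; exact hVU hxV
  have hV'conn : IsPreconnected (Subtype.val '' V) :=
    hVconn.image _ continuous_subtype_val.continuousOn
  have hz₀V' : z₀ ∈ Subtype.val '' V := ⟨x₀, mem_of_mem_nhds hVnhds, rfl⟩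
  -- choose scale m
  obtain ⟨m, hm⟩ := exists_pow_lt_of_lt_one (show (0:ℝ) < ε/3 by positivity)
    (show (1:ℝ)/4 < 1 by norm_num)
  have hm' : (1:ℝ)/4^m < ε/3 := by
    have : ((1:ℝ)/4)^m = 1/4^m := by rw [div_pow, one_pow]
    rwa [this] at hm
  have hp0 : (0:ℝ) < 4^m := by positivity
  have hp1 : (0:ℝ) < 4^(m+1) := by positivity
  have hp2 : (0:ℝ) < 4^(m+2) := by positivity
  have h42 : (4:ℝ)^(m+2) = 4^(m+1)*4 := pow_succ 4 (m+1)
  have h41 : (4:ℝ)^(m+1) = 4^m*4 := pow_succ 4 m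
  set u : ℝ := 3/4^(m+1) with hudef
  have huK : u ∈ K := h3pow m
  set q : ℝ := 1 + 3/4^(m+2) with hqdef
  have hqu : q = (u+4)/4 := by rw [hqdef, hudef, h42]; field_simp; ring
  set zq : ℂ := ((q:ℝ):ℂ) + ((3/4:ℝ):ℂ)*I with hzqdef
  have hzqX : zq ∈ X := by
    rw [hX]
    refine Or.inl (Set.mem_biUnion (show (8:Fin 12) ∈ ({8,9,10,11} : Set (Fin 12))
      by norm_num) ?_)
    exact ⟨((u:ℝ):ℂ) + ((0:ℝ):ℂ)*I, hCmem' u 0 huK (by norm_num),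
      f12_eval' 8 4 3 d12_8 u 0 q (3/4) hqu (by norm_num)⟩
  have hq1 : q - 1 = 3/4^(m+2) := by rw [hqdef]; ring
  have hq1' : (0:ℝ) ≤ q - 1 := by rw [hq1]; positivity
  have hzqdist : dist zq z₀ = 3/4^(m+2) := by
    have hsub : zq - z₀ = ((q - 1 : ℝ):ℂ) := by rw [hzqdef, hz₀def]; push_cast; ring
    rw [Complex.dist_eq, hsub, Complex.norm_real, Real.norm_eq_abs, _root_.abs_of_nonneg hq1', hq1]
  have hzqV' : zq ∈ Subtype.val '' V := by
    apply hst zq hzqX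
    rw [hzqdist]
    have hle : (3:ℝ)/4^(m+2) ≤ 3/4^m := by
      apply div_le_div_of_nonneg_left (by norm_num) hp0
      rw [h42, h41]; nlinarith
    have : (3:ℝ)/4^m < ε := by
      have := hm'
      rw [div_lt_iff₀ hp0] at this ⊢
      linarith
    linarith
  -- the real-part image
  have hreconn : IsPreconnected (Complex.re '' (Subtype.val '' V)) :=
    hV'conn.image _ Complex.continuous_re.continuousOn
  have h1mem : (1:ℝ) ∈ Complex.re '' (Subtype.val '' V) :=
    ⟨z₀, hz₀V', by rw [hz₀def]; simp⟩
  have hqmem : q ∈ Complex.re '' (Subtype.val '' V) :=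
    ⟨zq, hzqV', by rw [hzqdef]; simp⟩
  set g : ℝ := 1 + 2/4^(m+2) with hgdef
  have hg1 : 1 ≤ g := by
    have : (0:ℝ) < 2/4^(m+2) := by positivity
    rw [hgdef]; linarith
  have hgq : g ≤ q := by
    have : (2:ℝ)/4^(m+2) ≤ 3/4^(m+2) := by gcongr <;> norm_num
    rw [hgdef, hqdef]; linarith
  obtain ⟨w, hwV', hwre⟩ := hreconn.Icc_subset h1mem hqmem ⟨hg1, hgq⟩
  have hwX := hV'X hwV'
  have hwball := Metric.mem_ball.1 (hV'ball hwV')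
  have hwim : |w.im - 3/4| < 1/8 := by
    have hsubim : (w - z₀).im = w.im - 3/4 := by rw [hz₀def]; simp
    calc |w.im - 3/4| = |(w - z₀).im| := by rw [hsubim]
    _ ≤ ‖w - z₀‖ := Complex.abs_im_le_norm _
    _ = dist w z₀ := (Complex.dist_eq w z₀).symm
    _ < 1/8 := hwball
  rw [hX] at hwX
  rcases hwX with hw | ⟨t, ht, hteq⟩
  · obtain ⟨k, hk, w', hw'C, hfw⟩ := Set.mem_iUnion₂.1 hw
    obtain ⟨u', hu', v', hv', hw'⟩ := hCmem w' hw'C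
    obtain ⟨a, hd, hacases⟩ := hk4 k hk
    have hre : (u'+a)/4 = g := by
      rw [← hwre, ← hfw, ← hw', f12_re_s16 k a 3 hd u' v']
    have hu'0 := hK0 u' hu'
    have hP4 : (4:ℝ) ≤ 4^(m+1) := by
      calc (4:ℝ) = 4^1 := by norm_num
      _ ≤ 4^(m+1) := by apply pow_le_pow_right₀ (by norm_num); omega
    have h2P : (2:ℝ)/4^(m+1) ≤ 1/2 := by
      rw [div_le_iff₀ hp1]; linarith
    rcases hacases with rfl | ha5
    · -- a = 4 : the gap
      have hu'val : u' = 2/4^(m+1) := by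
        have h4g : (4:ℝ)*g - 4 = 2/4^(m+1) := by
          rw [hgdef, h42]; field_simp; ring
        linarith [hre]
      refine hgap (m+1) u' hu' ⟨?_, ?_⟩
      · rw [hu'val, div_lt_div_iff₀ hp1 hp1]; nlinarith
      · rw [hu'val, div_lt_div_iff₀ hp1 hp1]; nlinarith
    · have ha5' : 5 ≤ a := by rcases ha5 with rfl | rfl | rfl <;> norm_num
      have hgval : g ≤ 1 + 1/8 := by
        rw [hgdef]
        have : (2:ℝ)/4^(m+2) ≤ 2/16 := by
          apply div_le_div_of_nonneg_left (by norm_num) (by norm_num)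
          rw [h42]; nlinarith [hP4]
        linarith
      -- u' = 4g - a ≤ 4(1+1/8) - 5 < 0
      have : u' = 4*g - a := by linarith [hre]
      linarith
  · -- segment : imaginary part 1
    have : w.im = 1 := by rw [← hteq]; simp
    rw [this] at hwim
    rw [abs_of_pos (by norm_num)] at hwim
    linarith
end
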